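/- Let 0 = r_0 < r_1 < ... < r_n and let \rho > r_n. Setting \Lambda_1 = (r_0,...,r_n) and \Lambda_2 = (r_0,...,r_n,\rho), the Gelfond-Bernstein bases satisfy H^n_{k,\Lambda_1}(t) = ((\rho - r_k)/\rho) H^{n+1}_{k,\Lambda_2}(t) + (r_{k+1}/\rho) H^{n+1}_{k+1,\Lambda_2}(t) for k = 0,...,n (with the convention r_{n+1} = \rho). -/

import Mathlib

/-- The divided difference `[x 0, ..., x n] f` at pairwise distinct points,
given by the explicit formula `∑ i, f (x i) / ∏_{j ≠ i} (x i - x j)`. -/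
noncomputable def divSum (n : ℕ) (x : Fin (n+1) → ℝ) (f : ℝ → ℝ) : ℝ :=
  ∑ i : Fin (n+1), f (x i) / ∏ j ∈ Finset.univ.erase i, (x i - x j)


/-- The Gelfond-Bernstein basis function `H^n_{k,Λ}` associated with the sequence
`Λ = (r 0, ..., r n)`: `H^n_k (t) = (-1)^(n-k) r_{k+1} ⋯ r_n [r_k, ..., r_n] f_t`
for `k ≤ n-1` and `H^n_n (t) = t ^ (r n)`, where `f_t x = t ^ x` (real power). -/
noncomputable def GB (n : ℕ) (r : Fin (n+1) → ℝ) (k : Fin (n+1)) (t : ℝ) : ℝ :=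
  if k.val = n then t ^ (r k)
  else (-1 : ℝ) ^ (n - k.val) * (∏ j ∈ Finset.Ioi k, r j) *
    divSum (n - k.val)
      (fun i => r ⟨k.val + i.val, by have h1 := i.isLt; have h2 := k.isLt; omega⟩)
      (fun x => t ^ x)

/-- Dimension elevation: adjoining an exponent rho greater than r n, each order-n
Gelfond-Bernstein basis function is the stated combination of two order-(n+1) ones. -/
noncomputable def dd {ι : Type*} [DecidableEq ι] (x : ι → ℝ) (f : ℝ → ℝ) (S : Finset ι) : ℝ :=
  ∑ i ∈ S, f (x i) / ∏ j ∈ S.erase i, (x i - x j)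

lemma dd_singleton {ι : Type*} [DecidableEq ι] (x : ι → ℝ) (f : ℝ → ℝ) (a : ι) :
    dd x f {a} = f (x a) := by
  simp [dd]

lemma dd_erase_eq {ι : Type*} [DecidableEq ι] (x : ι → ℝ) (f : ℝ → ℝ) (S : Finset ι)
    (a : ι) (ha : a ∈ S) (hinj : Set.InjOn x S) :
    dd x f (S.erase a)
      = ∑ i ∈ S, f (x i) * (x i - x a) / ∏ j ∈ S.erase i, (x i - x j) := by
  rw [dd, ← Finset.sum_erase S
    (f := fun i => f (x i) * (x i - x a) / ∏ j ∈ S.erase i, (x i - x j)) (a := a) (by simp)]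
  refine Finset.sum_congr rfl ?_
  intro i hi
  have hia : i ≠ a := Finset.ne_of_mem_erase hi
  have hiS : i ∈ S := Finset.mem_of_mem_erase hi
  have haS : a ∈ S.erase i := Finset.mem_erase.mpr ⟨fun h => hia h.symm, ha⟩
  have hxia : x i - x a ≠ 0 := sub_ne_zero.mpr (fun h => hia (hinj hiS ha h))
  rw [Finset.erase_right_comm]
  rw [← Finset.mul_prod_erase _ _ haS]
  rw [mul_comm (f (x i)) (x i - x a), mul_div_mul_left _ _ hxia]

lemma dd_rec {ι : Type*} [DecidableEq ι] (x : ι → ℝ) (f : ℝ → ℝ) (S : Finset ι)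
    (a b : ι) (ha : a ∈ S) (hb : b ∈ S) (hinj : Set.InjOn x S) :
    (x b - x a) * dd x f S = dd x f (S.erase a) - dd x f (S.erase b) := by
  rw [dd_erase_eq x f S a ha hinj, dd_erase_eq x f S b hb hinj,
    ← Finset.sum_sub_distrib, dd, Finset.mul_sum]
  refine Finset.sum_congr rfl ?_
  intro i _
  rw [div_sub_div_same, ← mul_div_assoc]
  congr 1
  ring
def emb (a m N : ℕ) (h : a + m < N) : Fin (m+1) ↪ Fin N :=
  ⟨fun i => ⟨a + i.val, by have := i.isLt; omega⟩, fun i j hij => by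
    have := congrArg Fin.val hij
    simp only at this
    exact Fin.ext (by omega)⟩

lemma mem_emb {a m N : ℕ} {h : a + m < N} {j : Fin N} :
    j ∈ Finset.univ.map (emb a m N h) ↔ a ≤ j.val ∧ j.val ≤ a + m := by
  simp only [Finset.mem_map, Finset.mem_univ, true_and, emb, Function.Embedding.coeFn_mk,
    Fin.ext_iff]
  constructor
  · rintro ⟨i, hi⟩
    have := i.isLt
    have h' : a + i.val = j.val := hi
    omega
  · rintro ⟨h1, h2⟩
    exact ⟨⟨j.val - a, by omega⟩, by show a + (j.val - a) = j.val; omega⟩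

lemma divSum_eq_dd {ι : Type*} [DecidableEq ι] (m : ℕ) (x : ι → ℝ) (e : Fin (m+1) ↪ ι)
    (f : ℝ → ℝ) : divSum m (x ∘ e) f = dd x f (Finset.univ.map e) := by
  rw [dd, Finset.sum_map]
  refine Finset.sum_congr rfl ?_
  intro i _
  rw [← Finset.map_erase, Finset.prod_map]
  rfl

lemma snoc_eval {n : ℕ} (r : Fin (n+1) → ℝ) (ρ : ℝ) (j : Fin (n+2)) (hj : j.val < n+1) :
    (Fin.snoc r ρ : Fin (n+2) → ℝ) j = r ⟨j.val, hj⟩ := by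
  exact Fin.snoc_castSucc (α := fun _ => ℝ) (i := ⟨j.val, hj⟩) ..

lemma snoc_mono {n : ℕ} {r : Fin (n+1) → ℝ} (hr : StrictMono r) {ρ : ℝ}
    (hρ : r (Fin.last n) < ρ) : StrictMono (Fin.snoc r ρ : Fin (n+2) → ℝ) := by
  intro i j hij
  rw [Fin.lt_def] at hij
  rcases lt_or_ge j.val (n+1) with hj | hj
  · have hi : i.val < n+1 := by omega
    rw [snoc_eval r ρ i hi, snoc_eval r ρ j hj]
    exact hr (Fin.mk_lt_mk.mpr hij)
  · have hj' : j = Fin.last (n+1) := Fin.ext (by have := j.isLt; simp; omega)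
    subst hj'
    have hi : i.val < n+1 := by simpa using hij
    rw [Fin.snoc_last, snoc_eval r ρ i hi]
    calc r ⟨i.val, hi⟩ ≤ r (Fin.last n) := hr.monotone (by simp only [Fin.le_def, Fin.val_last]; omega)
      _ < ρ := hρ


theorem stmt11 (n : ℕ) (r : Fin (n+1) → ℝ) (hr : StrictMono r) (h0 : r 0 = 0)
    (ρ : ℝ) (hρ : r (Fin.last n) < ρ) (t : ℝ) (ht : 0 < t) (k : Fin (n+1)) :
    GB n r k t
      = ((ρ - r k) / ρ) * GB (n+1) (Fin.snoc r ρ) k.castSucc t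
        + ((Fin.snoc r ρ : Fin (n+2) → ℝ) k.succ / ρ) * GB (n+1) (Fin.snoc r ρ) k.succ t := by
  set Λ : Fin (n+2) → ℝ := (Fin.snoc r ρ : Fin (n+2) → ℝ) with hΛ
  set f : ℝ → ℝ := fun x => t ^ x with hf
  have hk := k.isLt
  have hΛmono : StrictMono Λ := snoc_mono hr hρ
  -- the three index sets
  have hm1 : k.val + (n - k.val) < n + 2 := by omega
  have hm2 : k.val + (n + 1 - k.val) < n + 2 := by omega
  have hm3 : (k.val + 1) + (n + 1 - (k.val + 1)) < n + 2 := by omega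
  set S₁ : Finset (Fin (n+2)) := Finset.univ.map (emb k.val (n - k.val) (n+2) hm1) with hS1
  set S₂ : Finset (Fin (n+2)) := Finset.univ.map (emb k.val (n + 1 - k.val) (n+2) hm2) with hS2
  set S₃ : Finset (Fin (n+2)) := Finset.univ.map (emb (k.val+1) (n + 1 - (k.val + 1)) (n+2) hm3) with hS3
  have ha2 : (⟨k.val, by omega⟩ : Fin (n+2)) ∈ S₂ := by
    rw [hS2]
    exact mem_emb.mpr ⟨show k.val ≤ k.val from le_rfl,
      show k.val ≤ k.val + (n + 1 - k.val) from Nat.le_add_right _ _⟩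
  have hb2 : (⟨n+1, by omega⟩ : Fin (n+2)) ∈ S₂ := by
    rw [hS2]
    exact mem_emb.mpr ⟨show k.val ≤ n+1 by omega, show n+1 ≤ k.val + (n + 1 - k.val) by omega⟩
  have hS21 : S₂.erase ⟨n+1, by omega⟩ = S₁ := by
    ext j; simp only [Finset.mem_erase, ne_eq, hS1, hS2, mem_emb, Fin.ext_iff, Fin.val_mk]; omega
  have hS23 : S₂.erase ⟨k.val, by omega⟩ = S₃ := by
    ext j; simp only [Finset.mem_erase, ne_eq, hS2, hS3, mem_emb, Fin.ext_iff, Fin.val_mk]; omega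
  have hΛa : Λ ⟨k.val, by omega⟩ = r k := by
    rw [hΛ, snoc_eval r ρ _ (show k.val < n+1 from k.isLt)]
  have hΛb : Λ ⟨n+1, by omega⟩ = ρ := by
    have : (⟨n+1, by omega⟩ : Fin (n+2)) = Fin.last (n+1) := rfl
    rw [hΛ, this, Fin.snoc_last]
  have hrec : (ρ - r k) * dd Λ f S₂ = dd Λ f S₃ - dd Λ f S₁ := by
    have := dd_rec Λ f S₂ ⟨k.val, by omega⟩ ⟨n+1, by omega⟩ ha2 hb2 (hΛmono.injective.injOn)
    rwa [hS21, hS23, hΛa, hΛb] at this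
  -- products
  set P : ℝ := ∏ j ∈ Finset.Ioi k, r j with hP
  have hB : ∏ j ∈ Finset.Ioi k.castSucc, Λ j = ρ * P := by
    have hset : Finset.Ioi k.castSucc
        = insert (Fin.last (n+1)) ((Finset.Ioi k).map Fin.castSuccEmb) := by
      ext j
      simp only [Finset.mem_Ioi, Finset.mem_insert, Finset.mem_map, Finset.mem_univ, true_and,
        Fin.lt_def, Fin.ext_iff, Fin.coe_castSucc, Fin.val_last, Fin.coe_castSuccEmb]
      constructor
      · intro hj
        rcases Nat.lt_or_ge j.val (n+1) with h | h
        · exact Or.inr ⟨⟨j.val, h⟩, hj, rfl⟩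
        · exact Or.inl (by have := j.isLt; omega)
      · rintro (h | ⟨i, hi1, hi2⟩)
        · omega
        · have := i.isLt
          omega
    rw [hset, Finset.prod_insert (by
      simp only [Finset.mem_map, Fin.coe_castSuccEmb]
      rintro ⟨i, -, hi⟩
      have := congrArg Fin.val hi
      simp only [Fin.coe_castSucc, Fin.val_last] at this
      have := i.isLt
      omega), Finset.prod_map]
    rw [show Λ (Fin.last (n+1)) = ρ from Fin.snoc_last ..]
    congr 1
    refine Finset.prod_congr rfl fun j _ => ?_
    exact Fin.snoc_castSucc (α := fun _ => ℝ) (i := j) ..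
  have hA : ∏ j ∈ Finset.Ioi k.castSucc, Λ j = Λ k.succ * ∏ j ∈ Finset.Ioi k.succ, Λ j := by
    have hset : Finset.Ioi k.castSucc = insert k.succ (Finset.Ioi k.succ) := by
      ext j
      simp only [Finset.mem_Ioi, Finset.mem_insert, Fin.lt_def, Fin.ext_iff,
        Fin.coe_castSucc, Fin.val_succ]
      omega
    rw [hset, Finset.prod_insert (by simp)]
  set Q₃ : ℝ := ∏ j ∈ Finset.Ioi k.succ, Λ j with hQ3
  have hQ : Λ k.succ * Q₃ = ρ * P := by rw [hQ3, ← hA, hB]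
  -- the three GB values
  have h1 : GB n r k t = (-1 : ℝ) ^ (n - k.val) * P * dd Λ f S₁ := by
    by_cases hkn : k.val = n
    · rw [GB, if_pos hkn]
      have hs : S₁ = {⟨n, by omega⟩} := by
        ext j; simp only [hS1, mem_emb, Finset.mem_singleton, Fin.ext_iff]; omega
      have hio : Finset.Ioi k = ∅ := by
        ext j; simp only [Finset.mem_Ioi, Finset.notMem_empty, iff_false, not_lt, Fin.le_def]
        have := j.isLt; omega
      rw [hs, dd_singleton, hP, hio]
      have hk' : k = ⟨n, by omega⟩ := Fin.ext hkn
      have : Λ ⟨n, by omega⟩ = r ⟨n, by omega⟩ := by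
        rw [hΛ, snoc_eval r ρ _ (by omega)]
      rw [this, hkn, ← hk']
      simp [hf]
    · rw [GB, if_neg hkn]
      have hfun : (fun i : Fin (n - k.val + 1) =>
            r ⟨k.val + i.val, by have h1 := i.isLt; have h2 := k.isLt; omega⟩)
          = (Λ ∘ emb k.val (n - k.val) (n+2) hm1) := by
        funext i
        simp only [Function.comp_apply, hΛ]
        exact (snoc_eval r ρ (emb k.val (n - k.val) (n+2) hm1 i)
          (by show k.val + i.val < n+1; have := i.isLt; omega)).symm
      rw [hfun, divSum_eq_dd, hS1]
  have h2 : GB (n+1) Λ k.castSucc t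
      = (-1 : ℝ) ^ (n + 1 - k.val) * (ρ * P) * dd Λ f S₂ := by
    rw [GB, if_neg (by simp only [Fin.coe_castSucc]; omega)]
    simp only [Fin.coe_castSucc]
    rw [hB]
    congr 1
    have hfun : (fun i : Fin (n + 1 - k.val + 1) =>
          Λ ⟨k.val + i.val, by have h1 := i.isLt; omega⟩)
        = (Λ ∘ emb k.val (n + 1 - k.val) (n+2) hm2) := by
      funext i; rfl
    rw [hfun, divSum_eq_dd, hS2]
  have h3 : GB (n+1) Λ k.succ t
      = (-1 : ℝ) ^ (n - k.val) * Q₃ * dd Λ f S₃ := by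
    by_cases hkn : k.val = n
    · rw [GB, if_pos (by simp [Fin.val_succ, hkn])]
      have hs : S₃ = {⟨n+1, by omega⟩} := by
        ext j; simp only [hS3, mem_emb, Finset.mem_singleton, Fin.ext_iff]; omega
      have hio : Finset.Ioi k.succ = ∅ := by
        ext j
        simp only [Finset.mem_Ioi, Finset.notMem_empty, iff_false, not_lt, Fin.le_def,
          Fin.val_succ]
        have := j.isLt; omega
      have hksucc : k.succ = ⟨n+1, by omega⟩ := Fin.ext (by simp [Fin.val_succ, hkn])
      rw [hs, dd_singleton, hQ3, hio, hkn, hksucc, hΛb]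
      simp [hf]
    · rw [GB, if_neg (by simp only [Fin.val_succ]; omega)]
      simp only [Fin.val_succ]
      rw [show ((-1 : ℝ)) ^ (n + 1 - (k.val + 1)) = (-1 : ℝ) ^ (n - k.val) by
        congr 1; omega]
      congr 1
      have hfun : (fun i : Fin (n + 1 - (k.val + 1) + 1) =>
            Λ ⟨k.val + 1 + i.val, by have h1 := i.isLt; omega⟩)
          = (Λ ∘ emb (k.val + 1) (n + 1 - (k.val + 1)) (n+2) hm3) := by
        funext i; rfl
      rw [hfun, divSum_eq_dd, hS3]
  -- final algebra
  have hρ0 : ρ ≠ 0 := by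
    have : (0:ℝ) ≤ r (Fin.last n) := by rw [← h0]; exact hr.monotone (Fin.zero_le _)
    linarith
  have hsgn : (-1 : ℝ) ^ (n + 1 - k.val) = -((-1 : ℝ) ^ (n - k.val)) := by
    rw [show n + 1 - k.val = (n - k.val) + 1 by omega, pow_succ]; ring
  rw [h1, h2, h3, hsgn]
  set s : ℝ := (-1 : ℝ) ^ (n - k.val)
  set A := dd Λ f S₂
  set B := dd Λ f S₃
  set D := dd Λ f S₁
  have e1 : (ρ - r k) / ρ * (-s * (ρ * P) * A) = -(s * P * ((ρ - r k) * A)) := by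
    field_simp
  have e2 : Λ k.succ / ρ * (s * Q₃ * B) = s * P * B := by
    field_simp
    linear_combination (s * B) * hQ
  rw [e1, e2, hrec]
  ring
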